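/- The weak ideal topology j^I is idempotent (j^I ∘ j^I = j^I as natural endomorphisms of Ω) if and only if the ideal I is idempotent, i.e., I²(C) = I(C) for every object C. -/
import Mathlib


open CategoryTheory Opposite CategoryTheory.GrothendieckTopology

universe v u

variable {C : Type u} [Category.{v} C]

/-- An ideal of the presheaf category on `C`: a family of sieves `I(X)` such that
`f ∘ g ∈ I(D)` whenever `f : X ⟶ D` and `g ∈ I(X)`. -/
structure CIdeal (C : Type u) [Category.{v} C] where
  sieve : ∀ X : C, Sieve X
  comp : ∀ ⦃X D : C⦄ (f : X ⟶ D) ⦃Y : C⦄ (g : Y ⟶ X), sieve X g → sieve D (g ≫ f)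

/-- `I²(X) = { f ∘ g | f ∈ I(X), g ∈ I(dom f) }`. -/
def CIdeal.sq (I : CIdeal C) (X : C) : ∀ ⦃Y : C⦄, (Y ⟶ X) → Prop :=
  fun _Y h => ∃ (Z : C) (f : Z ⟶ X) (g : _Y ⟶ Z), I.sieve X f ∧ I.sieve Z g ∧ h = g ≫ f

/-- The `I`-closure of a family of subsets of the values of a presheaf `F`. -/
def CIdeal.cl (I : CIdeal C) (F : Cᵒᵖ ⥤ Type v)
    (G : ∀ X : C, Set (F.obj (op X))) (X : C) : Set (F.obj (op X)) :=
  {x | ∀ ⦃Y : C⦄ (f : Y ⟶ X), I.sieve X f → F.map f.op x ∈ G Y}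

/-- The weak ideal topology: `jᴵ(S) = { f | ∀ g ∈ I(dom f), f ∘ g ∈ S }`. -/
def CIdeal.jI (I : CIdeal C) {X : C} (S : Sieve X) : Sieve X where
  arrows := fun _Y f => ∀ ⦃Z : C⦄ (g : Z ⟶ _Y), I.sieve _Y g → S (g ≫ f)
  downward_closed := by
    intro Y Z f hf g W k hk
    have := hf (k ≫ g) (I.comp g k hk)
    simpa [Category.assoc] using this

/-- `jᴵ` is idempotent if and only if the ideal `I` is idempotent,
i.e. `I²(X) = I(X)` for every object `X` (here `I.sq` is `I²`). -/
theorem jI_idempotent_iff (I : CIdeal C) :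
    (∀ (X : C) (S : Sieve X), I.jI (I.jI S) = I.jI S)
      ↔ (∀ (X : C) ⦃Y : C⦄ (h : Y ⟶ X), I.sq X h ↔ I.sieve X h) := by
  constructor
  · intro hidem X Y h
    constructor
    · rintro ⟨Z, f, g, hf, hg, rfl⟩
      exact I.comp f g hg
    · intro hh
      -- the sieve of arrows in I.sq X
      let S : Sieve X :=
        { arrows := fun _ k => I.sq X k
          downward_closed := by
            rintro W V k ⟨Z, f, g, hf, hg, rfl⟩ l
            exact ⟨Z, f, l ≫ g, hf, (I.sieve Z).downward_closed hg l, by simp⟩ }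
      have hid : I.jI (I.jI S) (𝟙 X) := by
        intro Z g hg W g' hg'
        exact ⟨Z, g, g', hg, hg', by simp⟩
      rw [hidem X S] at hid
      have := hid h hh
      simpa using this
  · intro hI X S
    apply le_antisymm
    · intro Y f hf Z g hg
      obtain ⟨W, g₁, g₂, hg₁, hg₂, rfl⟩ := (hI Y g).2 hg
      have := hf g₁ hg₁ g₂ hg₂
      simpa [Category.assoc] using this
    · intro Y f hf Z g hg W g' hg'
      have : I.sieve Y (g' ≫ g) := I.comp g g' hg'
      have := hf (g' ≫ g) this
      simpa [Category.assoc] using this
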